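/- The 37 triangular lattice points of a regular hexagon of side length 3 form a 15-distance set: the set of squared pairwise distances is exactly {1, 3, 4, 7, 9, 12, 13, 16, 19, 21, 25, 27, 28, 31, 36}, which equals the 15 smallest positive Löschian numbers. -/

import Mathlib

/-- Triangular lattice point a•(1,0) + b•(1/2, √3/2). -/
noncomputable def tri (a b : ℤ) : ℝ × ℝ :=
  ((a : ℝ) + (b : ℝ) / 2, (b : ℝ) * Real.sqrt 3 / 2)

/-- Squared Euclidean distance in the plane. -/
def sqd (p q : ℝ × ℝ) : ℝ := (p.1 - q.1) ^ 2 + (p.2 - q.2) ^ 2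

/-- The triangular lattice. -/
noncomputable def triLattice : Set (ℝ × ℝ) := {p | ∃ a b : ℤ, p = tri a b}

/-- Closed regular hexagon of side `k` centered at the origin with a vertex at `(k,0)`. -/
noncomputable def hexR (k : ℤ) : Set (ℝ × ℝ) :=
  convexHull ℝ ({tri k 0, tri 0 k, tri (-k) k, tri (-k) 0, tri 0 (-k), tri k (-k)} : Set (ℝ × ℝ))

/-- Closed (k, k+1)-equiangular hexagon with vertices at lattice points. -/
noncomputable def hexE (k : ℤ) : Set (ℝ × ℝ) :=
  convexHull ℝ ({tri k 0, tri k (k+1), tri 0 (2*k+1), tri (-(k+1)) (2*k+1),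
    tri (-(k+1)) (k+1), tri 0 0} : Set (ℝ × ℝ))

/-- Set of squared distances between distinct points of `X`. -/
def sqdSet (X : Set (ℝ × ℝ)) : Set ℝ := {d | ∃ p ∈ X, ∃ q ∈ X, p ≠ q ∧ d = sqd p q}




noncomputable def triR (a b : ℝ) : ℝ × ℝ := (a + b / 2, b * Real.sqrt 3 / 2)

lemma tri_eq (a b : ℤ) : tri a b = triR a b := rfl

lemma sqrt3_pos : (0:ℝ) < Real.sqrt 3 := Real.sqrt_pos.2 (by norm_num)

lemma sqd_tri (a b c d : ℤ) :
    sqd (tri a b) (tri c d) = (((a-c)^2 + (a-c)*(b-d) + (b-d)^2 : ℤ) : ℝ) := by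
  have h3 : Real.sqrt 3 ^ 2 = 3 := Real.sq_sqrt (by norm_num)
  simp only [tri, sqd]
  push_cast
  nlinarith [h3]

lemma tri_inj {a b c d : ℤ} (h : tri a b = tri c d) : a = c ∧ b = d := by
  have h1 := congrArg Prod.fst h
  have h2 := congrArg Prod.snd h
  simp only [tri] at h1 h2
  have hb : (b:ℝ) = d := mul_right_cancel₀ (ne_of_gt sqrt3_pos) (by linarith)
  have : (a:ℝ) = c := by linarith
  exact ⟨by exact_mod_cast this, by exact_mod_cast hb⟩

lemma smul_triR (s t a b c d : ℝ) :
    s • triR a b + t • triR c d = triR (s*a + t*c) (s*b + t*d) := by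
  simp only [triR, Prod.smul_mk, smul_eq_mul, Prod.mk_add_mk, Prod.mk.injEq]
  constructor <;> ring


lemma comb_mem {a b c d : ℝ} (s t : ℝ) (hs : 0 ≤ s) (ht : 0 ≤ t) (hst : s + t = 1)
    (h1 : triR a b ∈ hexR 3) (h2 : triR c d ∈ hexR 3) :
    triR (s*a + t*c) (s*b + t*d) ∈ hexR 3 := by
  have := (convex_convexHull ℝ _) h1 h2 hs ht hst
  rwa [smul_triR] at this

lemma vert_mem (a b : ℤ) (h : (a,b) = (3,0) ∨ (a,b) = (0,3) ∨ (a,b) = (-3,3) ∨ (a,b) = (-3,0)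
    ∨ (a,b) = (0,-3) ∨ (a,b) = (3,-3)) : triR a b ∈ hexR 3 := by
  rw [← tri_eq]
  apply subset_convexHull
  rcases h with h|h|h|h|h|h <;>
    (injection h with ha hb; subst ha; subst hb; simp [Set.mem_insert_iff])

lemma mem_hexR3_real (a b : ℝ) (h1 : |a| ≤ 3) (h2 : |b| ≤ 3) (h3 : |a + b| ≤ 3) :
    triR a b ∈ hexR 3 := by
  rw [abs_le] at h1 h2 h3
  rcases le_or_gt 0 b with hb | hb
  · -- upper half
    have hden : (0:ℝ) < 6 - b := by linarith
    have hL : triR (-3) b ∈ hexR 3 := by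
      have := comb_mem (1 - b/3) (b/3) (by linarith) (by linarith) (by ring)
        (vert_mem (-3) 0 (by norm_num)) (vert_mem (-3) 3 (by norm_num))
      convert this using 2 <;> ring
    have hR : triR (3 - b) b ∈ hexR 3 := by
      have := comb_mem (1 - b/3) (b/3) (by linarith) (by linarith) (by ring)
        (vert_mem 3 0 (by norm_num)) (vert_mem 0 3 (by norm_num))
      convert this using 2 <;> push_cast <;> ring
    have := comb_mem ((3 - b - a)/(6 - b)) ((a + 3)/(6 - b))
      (by apply div_nonneg <;> linarith [h1.1,h1.2,h2.1,h2.2,h3.1,h3.2]) (by apply div_nonneg <;> linarith [h1.1,h1.2,h2.1,h2.2,h3.1,h3.2]) (by field_simp; ring) hL hR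
    convert this using 2 <;> field_simp <;> ring
  · have hden : (0:ℝ) < 6 + b := by linarith
    have hL : triR (-3 - b) b ∈ hexR 3 := by
      have := comb_mem (1 + b/3) (-b/3) (by linarith) (by linarith) (by ring)
        (vert_mem (-3) 0 (by norm_num)) (vert_mem 0 (-3) (by norm_num))
      convert this using 2 <;> push_cast <;> ring
    have hR : triR 3 b ∈ hexR 3 := by
      have := comb_mem (1 + b/3) (-b/3) (by linarith) (by linarith) (by ring)
        (vert_mem 3 0 (by norm_num)) (vert_mem 3 (-3) (by norm_num))
      convert this using 2 <;> push_cast <;> ring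
    have := comb_mem ((3 - a)/(6 + b)) ((a + 3 + b)/(6 + b))
      (by apply div_nonneg <;> linarith [h1.1,h1.2,h2.1,h2.2,h3.1,h3.2]) (by apply div_nonneg <;> linarith [h1.1,h1.2,h2.1,h2.2,h3.1,h3.2]) (by field_simp; ring) hL hR
    convert this using 2 <;> field_simp <;> ring

def K : Set (ℝ × ℝ) := {p | |Real.sqrt 3 * p.1 - p.2| ≤ 3 * Real.sqrt 3 ∧
    |p.2| ≤ 3 * Real.sqrt 3 / 2 ∧ |Real.sqrt 3 * p.1 + p.2| ≤ 3 * Real.sqrt 3}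

lemma K_convex : Convex ℝ K := by
  intro x hx y hy s t hs ht hst
  obtain ⟨hx1, hx2, hx3⟩ := hx
  obtain ⟨hy1, hy2, hy3⟩ := hy
  rw [abs_le] at hx1 hx2 hx3 hy1 hy2 hy3
  refine ⟨?_, ?_, ?_⟩ <;>
  · simp only [Prod.fst_add, Prod.snd_add, Prod.smul_fst, Prod.smul_snd, smul_eq_mul]
    rw [abs_le]
    constructor <;> nlinarith [hx1.1, hx1.2, hx2.1, hx2.2, hx3.1, hx3.2,
      hy1.1, hy1.2, hy2.1, hy2.2, hy3.1, hy3.2, mul_nonneg hs (sub_nonneg.2 hx1.1)]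

lemma triR_K (a b : ℝ) : triR a b ∈ K ↔ |a| ≤ 3 ∧ |b| ≤ 3 ∧ |a + b| ≤ 3 := by
  have h3 := sqrt3_pos
  have e1 : Real.sqrt 3 * (a + b/2) - b * Real.sqrt 3 / 2 = a * Real.sqrt 3 := by ring
  have e3 : Real.sqrt 3 * (a + b/2) + b * Real.sqrt 3 / 2 = (a + b) * Real.sqrt 3 := by ring
  have key : ∀ c : ℝ, (|c * Real.sqrt 3| ≤ 3 * Real.sqrt 3 ↔ |c| ≤ 3) := by
    intro c
    rw [abs_mul, abs_of_pos h3, mul_le_mul_iff_of_pos_right h3]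
  have key2 : |b * Real.sqrt 3 / 2| ≤ 3 * Real.sqrt 3 / 2 ↔ |b| ≤ 3 := by
    rw [abs_div, abs_mul, abs_of_pos h3, abs_of_pos (by norm_num : (0:ℝ) < 2)]
    constructor
    · intro h; nlinarith
    · intro h; nlinarith
  simp only [K, Set.mem_setOf_eq, triR, e1, e3, key, key2]

lemma hexR3_subset_K : hexR 3 ⊆ K := by
  apply convexHull_min _ K_convex
  intro p hp
  simp only [Set.mem_insert_iff, Set.mem_singleton_iff] at hp
  rcases hp with h|h|h|h|h|h <;> subst h <;> rw [tri_eq, triR_K] <;>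
    push_cast <;> norm_num

lemma mem_hex_iff (a b : ℤ) : tri a b ∈ hexR 3 ↔ |a| ≤ 3 ∧ |b| ≤ 3 ∧ |a + b| ≤ 3 := by
  constructor
  · intro h
    have h' := hexR3_subset_K h
    rw [tri_eq, triR_K] at h'
    obtain ⟨h1, h2, h3⟩ := h'
    rw [← Int.cast_abs] at h1 h2
    rw [show ((a:ℝ) + b) = ((a + b : ℤ) : ℝ) by push_cast; ring, ← Int.cast_abs] at h3
    exact ⟨by exact_mod_cast h1, by exact_mod_cast h2, by exact_mod_cast h3⟩
  · rintro ⟨h1, h2, h3⟩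
    rw [tri_eq]
    apply mem_hexR3_real
    · rw [← Int.cast_abs]; exact_mod_cast h1
    · rw [← Int.cast_abs]; exact_mod_cast h2
    · rw [show ((a:ℝ) + b) = ((a + b : ℤ) : ℝ) by push_cast; ring, ← Int.cast_abs]
      exact_mod_cast h3



noncomputable def S : Finset (ℤ × ℤ) :=
  ((Finset.Icc (-3:ℤ) 3) ×ˢ (Finset.Icc (-3:ℤ) 3)).filter (fun p => |p.1 + p.2| ≤ 3)

def nrm (p q : ℤ × ℤ) : ℤ :=
  (p.1 - q.1)^2 + (p.1 - q.1) * (p.2 - q.2) + (p.2 - q.2)^2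

def T : Finset ℤ := {1, 3, 4, 7, 9, 12, 13, 16, 19, 21, 25, 27, 28, 31, 36}

lemma S_card : S.card = 37 := by decide

lemma S_pairs : ∀ p ∈ S, ∀ q ∈ S, p = q ∨ nrm p q ∈ T := by decide

lemma losch_range : ∀ a ∈ Finset.Icc (-6:ℤ) 6, ∀ b ∈ Finset.Icc (-6:ℤ) 6,
    0 < a^2 + a*b + b^2 → a^2 + a*b + b^2 ≤ 36 → a^2 + a*b + b^2 ∈ T := by decide

lemma mem_S_iff (a b : ℤ) : (a, b) ∈ S ↔ |a| ≤ 3 ∧ |b| ≤ 3 ∧ |a + b| ≤ 3 := by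
  simp only [S, Finset.mem_filter, Finset.mem_product, Finset.mem_Icc, abs_le]
  tauto

lemma main_set_eq : triLattice ∩ hexR 3 = (fun p : ℤ × ℤ => tri p.1 p.2) '' ↑S := by
  ext p
  constructor
  · rintro ⟨⟨a, b, rfl⟩, hhex⟩
    rw [mem_hex_iff] at hhex
    exact ⟨(a, b), (mem_S_iff a b).2 hhex, rfl⟩
  · rintro ⟨⟨a, b⟩, hS, rfl⟩
    rw [Finset.mem_coe, mem_S_iff] at hS
    exact ⟨⟨a, b, rfl⟩, (mem_hex_iff a b).2 hS⟩

lemma card_37 : (triLattice ∩ hexR 3).ncard = 37 := by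
  rw [main_set_eq, Set.ncard_image_of_injOn, Set.ncard_coe_finset, S_card]
  intro ⟨a, b⟩ _ ⟨c, d⟩ _ h
  obtain ⟨h1, h2⟩ := tri_inj h
  exact Prod.ext h1 h2

lemma mem_X (a b : ℤ) (h : (a, b) ∈ S) : tri a b ∈ triLattice ∩ hexR 3 := by
  rw [main_set_eq]; exact ⟨(a, b), h, rfl⟩

lemma attained (a b c d : ℤ) (h1 : (a,b) ∈ S) (h2 : (c,d) ∈ S) (hne : (a,b) ≠ (c,d)) :
    ((nrm (a,b) (c,d) : ℤ) : ℝ) ∈ sqdSet (triLattice ∩ hexR 3) := by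
  refine ⟨tri a b, mem_X a b h1, tri c d, mem_X c d h2, ?_, ?_⟩
  · intro h
    obtain ⟨e1, e2⟩ := tri_inj h
    exact hne (by simp [e1, e2])
  · rw [sqd_tri]; norm_num [nrm]

lemma sqd_list : sqdSet (triLattice ∩ hexR 3) =
    ({1, 3, 4, 7, 9, 12, 13, 16, 19, 21, 25, 27, 28, 31, 36} : Set ℝ) := by
  ext x
  constructor
  · rintro ⟨p, hp, q, hq, hne, rfl⟩
    rw [main_set_eq] at hp hq
    obtain ⟨⟨a, b⟩, hS1, rfl⟩ := hp
    obtain ⟨⟨c, d⟩, hS2, rfl⟩ := hq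
    have hne' : (a, b) ≠ (c, d) := by
      rintro h; injection h with h1 h2; subst h1; subst h2; exact hne rfl
    have hT := (S_pairs _ hS1 _ hS2).resolve_left hne'
    rw [sqd_tri]
    have hn : nrm (a,b) (c,d) = (a-c)^2 + (a-c)*(b-d) + (b-d)^2 := rfl
    rw [← hn]
    simp only [T, Finset.mem_insert, Finset.mem_singleton] at hT
    simp only [Set.mem_insert_iff, Set.mem_singleton_iff]
    rcases hT with h|h|h|h|h|h|h|h|h|h|h|h|h|h|h <;> rw [h] <;> norm_num
  · intro hx
    simp only [Set.mem_insert_iff, Set.mem_singleton_iff] at hx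
    rcases hx with rfl|rfl|rfl|rfl|rfl|rfl|rfl|rfl|rfl|rfl|rfl|rfl|rfl|rfl|rfl
    · have := attained 1 0 0 0 (by decide) (by decide) (by decide); norm_num [nrm] at this; exact this
    · have := attained 1 1 0 0 (by decide) (by decide) (by decide); norm_num [nrm] at this; exact this
    · have := attained 2 0 0 0 (by decide) (by decide) (by decide); norm_num [nrm] at this; exact this
    · have := attained 2 1 0 0 (by decide) (by decide) (by decide); norm_num [nrm] at this; exact this
    · have := attained 3 0 0 0 (by decide) (by decide) (by decide); norm_num [nrm] at this; exact this
    · have := attained 1 1 (-1) (-1) (by decide) (by decide) (by decide); norm_num [nrm] at this; exact this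
    · have := attained 3 0 0 (-1) (by decide) (by decide) (by decide); norm_num [nrm] at this; exact this
    · have := attained 3 0 (-1) 0 (by decide) (by decide) (by decide); norm_num [nrm] at this; exact this
    · have := attained 3 0 0 (-2) (by decide) (by decide) (by decide); norm_num [nrm] at this; exact this
    · have := attained 3 0 (-1) (-1) (by decide) (by decide) (by decide); norm_num [nrm] at this; exact this
    · have := attained 3 0 (-2) 0 (by decide) (by decide) (by decide); norm_num [nrm] at this; exact this
    · have := attained 3 0 0 (-3) (by decide) (by decide) (by decide); norm_num [nrm] at this; exact this
    · have := attained 3 0 (-1) (-2) (by decide) (by decide) (by decide); norm_num [nrm] at this; exact this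
    · have := attained 3 0 (-2) (-1) (by decide) (by decide) (by decide); norm_num [nrm] at this; exact this
    · have := attained 3 0 (-3) 0 (by decide) (by decide) (by decide); norm_num [nrm] at this; exact this

lemma list_losch : ({1, 3, 4, 7, 9, 12, 13, 16, 19, 21, 25, 27, 28, 31, 36} : Set ℝ) =
    {x : ℝ | (∃ a b : ℤ, x = ((a ^ 2 + a * b + b ^ 2 : ℤ) : ℝ)) ∧ 0 < x ∧ x ≤ 36} := by
  ext x
  simp only [Set.mem_insert_iff, Set.mem_singleton_iff, Set.mem_setOf_eq]
  constructor
  · rintro (rfl|rfl|rfl|rfl|rfl|rfl|rfl|rfl|rfl|rfl|rfl|rfl|rfl|rfl|rfl)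
    · exact ⟨⟨1, 0, by norm_num⟩, by norm_num⟩
    · exact ⟨⟨1, 1, by norm_num⟩, by norm_num⟩
    · exact ⟨⟨2, 0, by norm_num⟩, by norm_num⟩
    · exact ⟨⟨2, 1, by norm_num⟩, by norm_num⟩
    · exact ⟨⟨3, 0, by norm_num⟩, by norm_num⟩
    · exact ⟨⟨2, 2, by norm_num⟩, by norm_num⟩
    · exact ⟨⟨3, 1, by norm_num⟩, by norm_num⟩
    · exact ⟨⟨4, 0, by norm_num⟩, by norm_num⟩
    · exact ⟨⟨3, 2, by norm_num⟩, by norm_num⟩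
    · exact ⟨⟨4, 1, by norm_num⟩, by norm_num⟩
    · exact ⟨⟨5, 0, by norm_num⟩, by norm_num⟩
    · exact ⟨⟨3, 3, by norm_num⟩, by norm_num⟩
    · exact ⟨⟨4, 2, by norm_num⟩, by norm_num⟩
    · exact ⟨⟨5, 1, by norm_num⟩, by norm_num⟩
    · exact ⟨⟨6, 0, by norm_num⟩, by norm_num⟩
  · rintro ⟨⟨a, b, rfl⟩, hpos, hle⟩
    have hpos' : (0:ℤ) < a^2 + a*b + b^2 := by exact_mod_cast hpos
    have hle' : a^2 + a*b + b^2 ≤ 36 := by exact_mod_cast hle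
    have ha : a ∈ Finset.Icc (-6:ℤ) 6 := by
      rw [Finset.mem_Icc]
      constructor <;> nlinarith [sq_nonneg (a + 2*b), sq_nonneg (2*a + b), sq_nonneg (a - 6), sq_nonneg (a + 6)]
    have hb : b ∈ Finset.Icc (-6:ℤ) 6 := by
      rw [Finset.mem_Icc]
      constructor <;> nlinarith [sq_nonneg (a + 2*b), sq_nonneg (2*a + b), sq_nonneg (b - 6), sq_nonneg (b + 6)]
    have hT := losch_range a ha b hb hpos' hle'
    simp only [T, Finset.mem_insert, Finset.mem_singleton] at hT
    rcases hT with h|h|h|h|h|h|h|h|h|h|h|h|h|h|h <;> rw [h] <;> norm_num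

theorem hexagon_side3_fifteen_distance :
    (triLattice ∩ hexR 3).ncard = 37 ∧
      sqdSet (triLattice ∩ hexR 3) =
        {1, 3, 4, 7, 9, 12, 13, 16, 19, 21, 25, 27, 28, 31, 36} ∧
      sqdSet (triLattice ∩ hexR 3) =
        {x : ℝ | (∃ a b : ℤ, x = ((a ^ 2 + a * b + b ^ 2 : ℤ) : ℝ)) ∧ 0 < x ∧ x ≤ 36} := by
  exact ⟨card_37, sqd_list, sqd_list.trans list_losch⟩
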